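/- For every real q ∈ (1, 32/27) there exists a closed disk V ⊆ ℂ such that V is contained in the open disk {z : |z| < √(q−1)} (so in particular 1 ∉ V and f_q is defined on V), 0 ∈ V, f_q(V) = V, and the product set V·V is contained in the interior of V. -/

import Mathlib

noncomputable section

/-- The Möbius transformation `f_q(y) = 1 + q/(y-1)`. -/
def fq (q y : ℂ) : ℂ := 1 + q / (y - 1)

/-- The product set `V·V = {v·w : v, w ∈ V}`. -/
def prodSet (V : Set ℂ) : Set ℂ := {z | ∃ v ∈ V, ∃ w ∈ V, z = v * w}

/-- `f_q` is an involution away from the pole. -/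
lemma fq_invol {q y : ℂ} (hq : q ≠ 0) (hy : y ≠ 1) : fq q (fq q y) = y := by
  have h1 : y - 1 ≠ 0 := sub_ne_zero.mpr hy
  simp only [fq]
  field_simp
  rw [show y - 1 + q - (y - 1) = q by ring, mul_comm, mul_div_assoc, div_self hq, mul_one]; ring

lemma sq_expand (z : ℂ) : ‖z‖ ^ 2 = z.re ^ 2 + z.im ^ 2 := by
  rw [Complex.sq_norm, Complex.normSq_apply]; ring

lemma abs_sub_le' (x y : ℂ) : ‖x - y‖ ≤ ‖x‖ + ‖y‖ := by
  simpa using norm_sub_le x y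

/-- The key algebraic identity used to show invariance of the disk. -/
lemma keyid (a ρ q : ℝ) (hkey : a ^ 2 - ρ ^ 2 = q) (w : ℂ) :
    ‖(a : ℂ) * w + (q : ℂ)‖ ^ 2
      = ρ ^ 2 * ‖w‖ ^ 2 + q * (‖w + (a : ℂ)‖ ^ 2 - ρ ^ 2) := by
  rw [sq_expand, sq_expand, sq_expand]
  simp only [Complex.add_re, Complex.add_im, Complex.mul_re, Complex.mul_im,
    Complex.ofReal_re, Complex.ofReal_im]
  linear_combination (w.re ^ 2 + w.im ^ 2 - q) * hkey

/-- Any closed disk with real center `-t` and radius `ρ` satisfying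
`(1+t)^2 - ρ^2 = q` together with the stated inequalities works. -/
lemma disk_works (q t ρ : ℝ) (ht0 : 0 < t) (htρ : t ≤ ρ) (hq1 : 1 < q)
    (hkey : (1 + t) ^ 2 - ρ ^ 2 = q) (hsub : (t + ρ) ^ 2 < q - 1)
    (hprod : (t + ρ) ^ 2 + t < ρ) :
    ∃ (c : ℂ) (ρ' : ℝ), 0 ≤ ρ' ∧
      Metric.closedBall c ρ' ⊆ Metric.ball (0 : ℂ) (Real.sqrt (q - 1)) ∧
      (0 : ℂ) ∈ Metric.closedBall c ρ' ∧
      fq (q : ℂ) '' Metric.closedBall c ρ' = Metric.closedBall c ρ' ∧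
      prodSet (Metric.closedBall c ρ') ⊆ interior (Metric.closedBall c ρ') := by
  have hρ0 : 0 < ρ := lt_of_lt_of_le ht0 htρ
  have haρ : ρ < 1 + t := by nlinarith
  have hmem : ∀ z : ℂ, z ∈ Metric.closedBall (-(t:ℂ)) ρ ↔ ‖z + t‖ ≤ ρ := by
    intro z; rw [Metric.mem_closedBall, Complex.dist_eq, sub_neg_eq_add]
  have hqc : (q : ℂ) ≠ 0 := by
    simp only [ne_eq, Complex.ofReal_eq_zero]; linarith
  have habs_bound : ∀ z : ℂ, ‖z + t‖ ≤ ρ → ‖z‖ ≤ t + ρ := by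
    intro z hz
    calc ‖z‖ = ‖(z + t) - t‖ := by ring_nf
      _ ≤ ‖z + t‖ + ‖(t:ℂ)‖ := abs_sub_le' _ _
      _ ≤ t + ρ := by rw [Complex.norm_real, Real.norm_eq_abs, abs_of_pos ht0]; linarith
  have hne1 : ∀ y : ℂ, y ∈ Metric.closedBall (-(t:ℂ)) ρ → y ≠ 1 := by
    intro y hy h1'
    rw [hmem] at hy
    subst h1'
    have : ‖1 + (t:ℂ)‖ = 1 + t := by
      rw [show (1 + (t:ℂ)) = ((1 + t : ℝ) : ℂ) by push_cast; ring, Complex.norm_real, Real.norm_eq_abs,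
        abs_of_pos (by linarith)]
    rw [this] at hy; linarith
  have hmaps : ∀ y : ℂ, y ∈ Metric.closedBall (-(t:ℂ)) ρ →
      fq (q:ℂ) y ∈ Metric.closedBall (-(t:ℂ)) ρ := by
    intro y hy
    have hy1 : y ≠ 1 := hne1 y hy
    have hw0 : y - 1 ≠ 0 := sub_ne_zero.mpr hy1
    have hw : ‖(y - 1) + ((1 + t : ℝ) : ℂ)‖ ≤ ρ := by
      rw [hmem] at hy
      have he : (y - 1) + ((1 + t : ℝ):ℂ) = y + t := by push_cast; ring
      rw [he]; exact hy
    have hk := keyid (1 + t) ρ q hkey (y - 1)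
    have habs2 : ‖((1 + t : ℝ):ℂ) * (y - 1) + (q:ℂ)‖ ^ 2
        ≤ (ρ * ‖y - 1‖) ^ 2 := by
      rw [hk]
      have h1' : ‖(y - 1) + ((1 + t : ℝ):ℂ)‖ ^ 2 ≤ ρ ^ 2 := by
        nlinarith [norm_nonneg ((y - 1) + ((1 + t : ℝ):ℂ))]
      nlinarith
    have habs : ‖((1 + t : ℝ):ℂ) * (y - 1) + (q:ℂ)‖ ≤ ρ * ‖y - 1‖ := by
      have hA := norm_nonneg (((1 + t : ℝ):ℂ) * (y - 1) + (q:ℂ))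
      have hB : 0 ≤ ρ * ‖y - 1‖ := mul_nonneg hρ0.le (norm_nonneg _)
      nlinarith
    rw [hmem]
    have hfy : fq (q:ℂ) y + t = (((1 + t : ℝ):ℂ) * (y - 1) + (q:ℂ)) / (y - 1) := by
      rw [fq]
      field_simp
      push_cast; ring
    rw [hfy, norm_div, div_le_iff₀ (norm_pos_iff.mpr hw0)]
    exact habs
  refine ⟨-(t:ℂ), ρ, hρ0.le, ?_, ?_, ?_, ?_⟩
  · intro z hz
    rw [hmem] at hz
    rw [Metric.mem_ball, Complex.dist_eq, sub_zero]
    have h1' : ‖z‖ ≤ t + ρ := habs_bound z hz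
    have h2' : t + ρ < Real.sqrt (q - 1) :=
      (Real.lt_sqrt (by linarith)).mpr hsub
    linarith
  · rw [hmem]
    simp only [zero_add, Complex.norm_real, Real.norm_eq_abs, abs_of_pos ht0]
    exact htρ
  · apply Set.Subset.antisymm
    · rintro _ ⟨y, hy, rfl⟩; exact hmaps y hy
    · intro y hy
      exact ⟨fq (q:ℂ) y, hmaps y hy, fq_invol hqc (hne1 y hy)⟩
  · rw [interior_closedBall _ (ne_of_gt hρ0)]
    rintro z ⟨v, hv, u, hu, rfl⟩
    rw [hmem] at hv hu
    have hvb : ‖v‖ ≤ t + ρ := habs_bound v hv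
    have hub : ‖u‖ ≤ t + ρ := habs_bound u hu
    rw [Metric.mem_ball, Complex.dist_eq, sub_neg_eq_add]
    calc ‖v * u + t‖ ≤ ‖v * u‖ + ‖(t:ℂ)‖ :=
          norm_add_le _ _
      _ = ‖v‖ * ‖u‖ + t := by
          rw [norm_mul, Complex.norm_real, Real.norm_eq_abs, abs_of_pos ht0]
      _ ≤ (t + ρ) * (t + ρ) + t := by
          have := norm_nonneg v
          have := norm_nonneg u
          nlinarith
      _ < ρ := by nlinarith

/-- A suitable disk exists whenever a parameter `s` with `s^2 < q-1` and
`s^3 + s^2 - s + (q-1) < 0` exists. -/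
lemma main (q s : ℝ) (hs : 0 < s) (h1 : s ^ 2 < q - 1)
    (h2 : s ^ 3 + s ^ 2 - s + (q - 1) < 0) :
    ∃ (c : ℂ) (ρ : ℝ), 0 ≤ ρ ∧
      Metric.closedBall c ρ ⊆ Metric.ball (0 : ℂ) (Real.sqrt (q - 1)) ∧
      (0 : ℂ) ∈ Metric.closedBall c ρ ∧
      fq (q : ℂ) '' Metric.closedBall c ρ = Metric.closedBall c ρ ∧
      prodSet (Metric.closedBall c ρ) ⊆ interior (Metric.closedBall c ρ) := by
  have hq1 : 1 < q := by nlinarith [sq_nonneg s]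
  have hs1 : (0:ℝ) < s + 1 := by linarith
  set t : ℝ := (s ^ 2 + (q - 1)) / (2 * (s + 1)) with ht_def
  have h2t' : 2 * (s + 1) * t = s ^ 2 + (q - 1) := by
    rw [ht_def]; field_simp
  have ht0 : 0 < t := by
    rw [ht_def]; apply div_pos (by nlinarith) (by linarith)
  have h2t : 2 * t < s - s ^ 2 := by nlinarith
  apply disk_works q t (s - t) ht0 (by nlinarith [sq_nonneg s]) hq1
  · linear_combination h2t'
  · have he : t + (s - t) = s := by ring
    rw [he]; exact h1
  · have he : t + (s - t) = s := by ring
    rw [he]; nlinarith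

/-- **Theorem.** For every real `q ∈ (1, 32/27)` there is a closed disk `V` contained
in the open disk of radius `√(q-1)` about `0`, with `0 ∈ V`, `f_q(V) = V`, and
`V·V` contained in the interior of `V`. -/
theorem invariant_disk_for_q_between_one_and_32_27
    (q : ℝ) (hq0 : 1 < q) (hq1 : q < 32 / 27) :
    ∃ (c : ℂ) (ρ : ℝ), 0 ≤ ρ ∧
      Metric.closedBall c ρ ⊆ Metric.ball (0 : ℂ) (Real.sqrt (q - 1)) ∧
      (0 : ℂ) ∈ Metric.closedBall c ρ ∧
      fq (q : ℂ) '' Metric.closedBall c ρ = Metric.closedBall c ρ ∧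
      prodSet (Metric.closedBall c ρ) ⊆ interior (Metric.closedBall c ρ) := by
  rcases le_or_gt (q - 1) (1/9) with hc | hc
  · set u : ℝ := Real.sqrt (q - 1) with hu_def
    have hu0 : 0 < u := Real.sqrt_pos.mpr (by linarith)
    have hu2 : u ^ 2 = q - 1 := Real.sq_sqrt (by linarith)
    have hu3 : u ≤ 1/3 := by nlinarith
    apply main q ((9/10) * u) (by positivity)
    · nlinarith
    · nlinarith [mul_pos hu0 hu0, mul_pos (mul_pos hu0 hu0) hu0]
  · apply main q (1/3) (by norm_num)
    · norm_num; linarith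
    · norm_num; linarith

end
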